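/- For the ternary symmetric channel with parameter p (P(y|x) = 1−2p if y=x, p otherwise) and the binary symmetric channel with parameter p, the sum of their exponents satisfies: Ẽ_{3} of the ternary channel equals −log(2√(p(1−2p)) + p) = (1/2)log(1/p) + O(1) as p → 0, while Ẽ_{3} of the BSC equals −(2/3)log(2√(p(1−p))) = (1/3)log(1/p) + O(1), so the sum is (5/6)log(1/p) + O(1), which is strictly less than log(1/p) + O(1) for all sufficiently small p. -/

import Mathlib

private lemma sum_pairs3' (f : Fin 3 × Fin 3 → ℝ) :
    ∑ q ∈ Finset.univ.filter (fun q : Fin 3 × Fin 3 => q.1 < q.2), f q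
      = f (0,1) + f (0,2) + f (1,2) := by
  rw [show (Finset.univ.filter (fun q : Fin 3 × Fin 3 => q.1 < q.2)) =
      ({((0:Fin 3),(1:Fin 3)), (0,2), (1,2)} : Finset (Fin 3 × Fin 3)) by decide,
    Finset.sum_insert (by decide), Finset.sum_insert (by decide), Finset.sum_singleton]
  ring

private lemma myciSup_eq {ι : Type*} [Nonempty ι] [Finite ι] (f : ι → ℝ) (v : ℝ)
    (h1 : ∀ i, f i ≤ v) (h2 : ∃ i, v ≤ f i) : (⨆ i, f i) = v := by
  obtain ⟨i, hi⟩ := h2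
  exact le_antisymm (ciSup_le h1)
    (hi.trans (le_ciSup (Set.Finite.bddAbove (Set.finite_range f)) i))

private lemma tern_sum (p : ℝ) (hp : 0 < p) (hp3 : p < 1/3) (a b : Fin 3) :
    ∑ y : Fin 3, Real.sqrt ((if y = a then 1 - 2*p else p) * (if y = b then 1 - 2*p else p))
      = if a = b then 1 else 2 * Real.sqrt (p * (1 - 2*p)) + p := by
  have h2 : (0:ℝ) ≤ 1 - 2*p := by linarith
  fin_cases a <;> fin_cases b <;>
    simp [Fin.sum_univ_three, Real.sqrt_mul hp.le, Real.sqrt_mul h2,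
      Real.mul_self_sqrt hp.le, Real.mul_self_sqrt h2] <;> ring

private lemma bsc_sum (p : ℝ) (hp : 0 < p) (hp2 : p < 1/2) (a b : Fin 2) :
    ∑ y : Fin 2, Real.sqrt ((if y = a then 1 - p else p) * (if y = b then 1 - p else p))
      = if a = b then 1 else 2 * Real.sqrt (p * (1 - p)) := by
  have h2 : (0:ℝ) ≤ 1 - p := by linarith
  fin_cases a <;> fin_cases b <;>
    simp [Fin.sum_univ_two, Real.sqrt_mul hp.le, Real.sqrt_mul h2,
      Real.mul_self_sqrt hp.le, Real.mul_self_sqrt h2] <;> ring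

private lemma etil_tern (p : ℝ) (hp : 0 < p) (hp3 : p < 1/3) :
    (2 / ((3:ℝ) * 2)) * (⨆ x : Fin 3 → Fin 3,
      ∑ q ∈ Finset.univ.filter (fun q : Fin 3 × Fin 3 => q.1 < q.2),
        - Real.log (∑ y : Fin 3, Real.sqrt
          ((if y = x q.1 then 1 - 2*p else p) * (if y = x q.2 then 1 - 2*p else p))))
      = - Real.log (2 * Real.sqrt (p * (1 - 2*p)) + p) := by
  set d : ℝ := - Real.log (2 * Real.sqrt (p * (1 - 2*p)) + p) with hd
  have hs := Real.sq_sqrt (show (0:ℝ) ≤ p * (1 - 2*p) by nlinarith)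
  have hsn := Real.sqrt_nonneg (p * (1 - 2*p))
  have hApos : 0 < 2 * Real.sqrt (p * (1 - 2*p)) + p := by linarith
  have hAle : 2 * Real.sqrt (p * (1 - 2*p)) + p ≤ 1 := by
    nlinarith [sq_nonneg (1 - 3*p), sq_nonneg (2 * Real.sqrt (p * (1-2*p)) - (1 - p))]
  have hd0 : 0 ≤ d := by
    rw [hd, neg_nonneg]; exact Real.log_nonpos hApos.le hAle
  have hdB : ∀ a b : Fin 3, - Real.log (∑ y : Fin 3, Real.sqrt
      ((if y = a then 1 - 2*p else p) * (if y = b then 1 - 2*p else p)))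
      = if a = b then 0 else d := by
    intro a b
    rw [tern_sum p hp hp3]
    split_ifs <;> simp [hd]
  rw [myciSup_eq _ (3 * d)]
  · ring
  · intro x
    rw [sum_pairs3']
    simp only [hdB]
    have t1 : (if x (0,1).1 = x (0,1).2 then (0:ℝ) else d) ≤ d := by split_ifs <;> linarith
    have t2 : (if x (0,2).1 = x (0,2).2 then (0:ℝ) else d) ≤ d := by split_ifs <;> linarith
    have t3 : (if x (1,2).1 = x (1,2).2 then (0:ℝ) else d) ≤ d := by split_ifs <;> linarith
    linarith
  · refine ⟨id, ?_⟩
    rw [sum_pairs3']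
    simp only [hdB]
    norm_num [Fin.ext_iff]
    try linarith

private lemma etil_bsc (p : ℝ) (hp : 0 < p) (hp2 : p < 1/2) :
    (2 / ((3:ℝ) * 2)) * (⨆ x : Fin 3 → Fin 2,
      ∑ q ∈ Finset.univ.filter (fun q : Fin 3 × Fin 3 => q.1 < q.2),
        - Real.log (∑ y : Fin 2, Real.sqrt
          ((if y = x q.1 then 1 - p else p) * (if y = x q.2 then 1 - p else p))))
      = - (2/3) * Real.log (2 * Real.sqrt (p * (1 - p))) := by
  set d : ℝ := - Real.log (2 * Real.sqrt (p * (1 - p))) with hd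
  have hs := Real.sq_sqrt (show (0:ℝ) ≤ p * (1 - p) by nlinarith)
  have hsn := Real.sqrt_nonneg (p * (1 - p))
  have hApos : 0 < 2 * Real.sqrt (p * (1 - p)) := by
    have : 0 < p * (1 - p) := by nlinarith
    have := Real.sqrt_pos.mpr this
    linarith
  have hAle : 2 * Real.sqrt (p * (1 - p)) ≤ 1 := by
    nlinarith [sq_nonneg (1 - 2*p), sq_nonneg (2 * Real.sqrt (p * (1-p)) - 1)]
  have hd0 : 0 ≤ d := by
    rw [hd, neg_nonneg]; exact Real.log_nonpos hApos.le hAle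
  have hdB : ∀ a b : Fin 2, - Real.log (∑ y : Fin 2, Real.sqrt
      ((if y = a then 1 - p else p) * (if y = b then 1 - p else p)))
      = if a = b then 0 else d := by
    intro a b
    rw [bsc_sum p hp hp2]
    split_ifs <;> simp [hd]
  rw [myciSup_eq _ (2 * d)]
  · ring
  · intro x
    rw [sum_pairs3']
    simp only [hdB]
    have hpig : x (0,1).1 = x (0,1).2 ∨ x (0,2).1 = x (0,2).2 ∨ x (1,2).1 = x (1,2).2 := by
      have : ∀ a b c : Fin 2, a = b ∨ a = c ∨ b = c := by decide
      exact this _ _ _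
    have t1 : (if x (0,1).1 = x (0,1).2 then (0:ℝ) else d) ≤ d := by split_ifs <;> linarith
    have t2 : (if x (0,2).1 = x (0,2).2 then (0:ℝ) else d) ≤ d := by split_ifs <;> linarith
    have t3 : (if x (1,2).1 = x (1,2).2 then (0:ℝ) else d) ≤ d := by split_ifs <;> linarith
    rcases hpig with h | h | h <;> rw [if_pos h] <;> linarith
  · refine ⟨![0, 1, 1], ?_⟩
    rw [sum_pairs3']
    simp only [hdB]
    norm_num [Matrix.cons_val_zero, Matrix.cons_val_one, Matrix.cons_val_two, Matrix.tail_cons, Matrix.head_cons, Fin.ext_iff]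
    try linarith

private lemma key_bound (p : ℝ) (hp : 0 < p) (hp4 : p < 1/4) :
    |(-Real.log (2 * Real.sqrt (p * (1 - 2 * p)) + p)
      + -((2/3) * Real.log (2 * Real.sqrt (p * (1 - p))))) + (5/6) * Real.log p| ≤ 3 := by
  have h2 : (0:ℝ) ≤ 1 - 2*p := by linarith
  have h1 : (0:ℝ) ≤ 1 - p := by linarith
  set u : ℝ := 2 * Real.sqrt (1 - 2*p) + Real.sqrt p with hu
  set v : ℝ := 2 * Real.sqrt (1 - p) with hv
  have hps : Real.sqrt p * Real.sqrt p = p := Real.mul_self_sqrt hp.le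
  have hspos : 0 < Real.sqrt p := Real.sqrt_pos.mpr hp
  have hA : 2 * Real.sqrt (p * (1 - 2 * p)) + p = Real.sqrt p * u := by
    rw [Real.sqrt_mul hp.le, hu]; linear_combination -hps
  have hB : 2 * Real.sqrt (p * (1 - p)) = Real.sqrt p * v := by
    rw [Real.sqrt_mul hp.le, hv]; ring
  have hs2 := Real.sq_sqrt h2
  have hs2n := Real.sqrt_nonneg (1 - 2*p)
  have hs2le : Real.sqrt (1 - 2*p) ≤ 1 := Real.sqrt_le_one.mpr (by linarith)
  have hs1 := Real.sq_sqrt h1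
  have hs1n := Real.sqrt_nonneg (1 - p)
  have hs1le : Real.sqrt (1 - p) ≤ 1 := Real.sqrt_le_one.mpr (by linarith)
  have hsple : Real.sqrt p ≤ 1 := Real.sqrt_le_one.mpr (by linarith)
  have hu1 : 1 ≤ u := by nlinarith [hspos.le, sq_nonneg (Real.sqrt (1-2*p) - 1/2)]
  have hu3 : u ≤ 3 := by rw [hu]; linarith
  have hv1 : 1 ≤ v := by nlinarith [sq_nonneg (Real.sqrt (1-p) - 1/2)]
  have hv2 : v ≤ 2 := by rw [hv]; linarith
  have hupos : (0:ℝ) < u := by linarith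
  have hvpos : (0:ℝ) < v := by linarith
  rw [hA, hB, Real.log_mul (ne_of_gt hspos) (ne_of_gt hupos),
    Real.log_mul (ne_of_gt hspos) (ne_of_gt hvpos), Real.log_sqrt hp.le]
  have hlu0 : 0 ≤ Real.log u := Real.log_nonneg hu1
  have hlu2 : Real.log u ≤ 2 := by
    have := Real.log_le_sub_one_of_pos hupos; linarith
  have hlv0 : 0 ≤ Real.log v := Real.log_nonneg hv1
  have hlv1 : Real.log v ≤ 1 := by
    have := Real.log_le_sub_one_of_pos hvpos; linarith
  rw [abs_le]; constructor <;> nlinarith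

/-- For the ternary symmetric channel and BSC with parameter `p`:
`Ẽ₃(ternary) = -log(2√(p(1-2p)) + p)` and `Ẽ₃(BSC) = -(2/3)log(2√(p(1-p)))`;
their sum is `(5/6)log(1/p) + O(1)` as `p → 0⁺`, and is strictly below
`log(1/p) + O(1)`, i.e., falls below `log(1/p) - C` for every constant `C`
for sufficiently small `p`. -/
theorem stmt19 :
    let dB : ∀ {K : ℕ}, (Fin K → Fin K → ℝ) → Fin K → Fin K → ℝ :=
      fun P x x' => - Real.log (∑ y, Real.sqrt (P x y * P x' y))
    let Etil3 : ∀ {K : ℕ}, (Fin K → Fin K → ℝ) → ℝ := fun P =>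
      (2 / ((3:ℝ) * 2)) * ⨆ x : Fin 3 → _,
        ∑ q ∈ Finset.univ.filter (fun q : Fin 3 × Fin 3 => q.1 < q.2), dB P (x q.1) (x q.2)
    let Ptern : ℝ → (Fin 3 → Fin 3 → ℝ) := fun p x y => if y = x then 1 - 2 * p else p
    let Pbsc : ℝ → (Fin 2 → Fin 2 → ℝ) := fun p x y => if y = x then 1 - p else p
    (∀ p : ℝ, 0 < p → p < 1/3 →
        Etil3 (Ptern p) = - Real.log (2 * Real.sqrt (p * (1 - 2 * p)) + p)) ∧
      (∀ p : ℝ, 0 < p → p < 1/2 →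
        Etil3 (Pbsc p) = - (2/3) * Real.log (2 * Real.sqrt (p * (1 - p)))) ∧
      (∃ C : ℝ, ∀ᶠ p in nhdsWithin (0:ℝ) (Set.Ioi 0),
        |Etil3 (Ptern p) + Etil3 (Pbsc p) - (5/6) * Real.log (1/p)| ≤ C) ∧
      (∀ C : ℝ, ∀ᶠ p in nhdsWithin (0:ℝ) (Set.Ioi 0),
        Etil3 (Ptern p) + Etil3 (Pbsc p) < Real.log (1/p) - C) := by
  intro dB Etil3 Ptern Pbsc
  have htern : ∀ p : ℝ, 0 < p → p < 1/3 →
      Etil3 (Ptern p) = - Real.log (2 * Real.sqrt (p * (1 - 2 * p)) + p) := by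
    intro p hp hp3
    exact etil_tern p hp hp3
  have hbsc : ∀ p : ℝ, 0 < p → p < 1/2 →
      Etil3 (Pbsc p) = - (2/3) * Real.log (2 * Real.sqrt (p * (1 - p))) := by
    intro p hp hp2
    exact etil_bsc p hp hp2
  have hmem : Set.Ioo (0:ℝ) (1/4) ∈ nhdsWithin (0:ℝ) (Set.Ioi 0) :=
    Ioo_mem_nhdsGT_of_mem (by norm_num : (0:ℝ) ∈ Set.Ico (0:ℝ) (1/4))
  refine ⟨htern, hbsc, ⟨3, ?_⟩, ?_⟩
  · filter_upwards [hmem] with p hp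
    obtain ⟨hp0, hp4⟩ := hp
    rw [htern p hp0 (by linarith), hbsc p hp0 (by linarith), one_div, Real.log_inv]
    have := key_bound p hp0 hp4
    have heq : -Real.log (2 * Real.sqrt (p * (1 - 2 * p)) + p) +
        -(2/3) * Real.log (2 * Real.sqrt (p * (1 - p))) - 5/6 * -Real.log p
        = (-Real.log (2 * Real.sqrt (p * (1 - 2 * p)) + p)
          + -((2/3) * Real.log (2 * Real.sqrt (p * (1 - p))))) + (5/6) * Real.log p := by
      ring
    rw [heq]
    exact this
  · intro C
    have hδ : (0:ℝ) < min (1/4) (Real.exp (-(6*C + 19))) := by positivity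
    have hmem2 : Set.Ioo (0:ℝ) (min (1/4) (Real.exp (-(6*C + 19)))) ∈
        nhdsWithin (0:ℝ) (Set.Ioi 0) :=
      Ioo_mem_nhdsGT_of_mem (Set.mem_Ico.mpr ⟨le_refl _, hδ⟩)
    filter_upwards [hmem2] with p hp
    obtain ⟨hp0, hpδ⟩ := hp
    have hp4 : p < 1/4 := lt_of_lt_of_le hpδ (min_le_left _ _)
    have hpe : p < Real.exp (-(6*C + 19)) := lt_of_lt_of_le hpδ (min_le_right _ _)
    have hlogp : Real.log p < -(6*C + 19) := (Real.log_lt_iff_lt_exp hp0).mpr hpe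
    rw [htern p hp0 (by linarith), hbsc p hp0 (by linarith), one_div, Real.log_inv]
    have hkb := abs_le.mp (key_bound p hp0 hp4)
    nlinarith [hkb.1, hkb.2]
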